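/- Let A be a finite alphabet of cardinality q ≥ 2, and let C ⊆ A^n be a code of cardinality m, where m ≥ 5 or m = 3, with an encoding bijection λ : M → C. Then there exists a subgroup H ≤ S(M) that is closed under the action on P∖P_2 such that Mon(C) = H ∩ Iso(C). -/

import Mathlib

/-- Partitions of `Fin m` are represented as finsets of finsets. -/
abbrev Ptn (m : ℕ) := Finset (Finset (Fin m))

/-- `α` is a partition of `Fin m`: all classes are nonempty and every element
belongs to exactly one class. -/
def IsPartition {m : ℕ} (α : Ptn m) : Prop :=
  (∀ c ∈ α, c.Nonempty) ∧ ∀ i : Fin m, ∃! c, c ∈ α ∧ i ∈ c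

/-- `P`: the set of partitions of `M = Fin m` into at most `q` nonempty classes. -/
def Pset (m q : ℕ) : Set (Ptn m) :=
  {α | IsPartition α ∧ α.card ≤ q}

/-- `P₂`: the partitions of the form `{{i,j}, M ∖ {i,j}}` for 2-element subsets `{i,j}`. -/
def P2set (m : ℕ) : Set (Ptn m) :=
  {α | ∃ p : Finset (Fin m), p.card = 2 ∧ α = {p, pᶜ}}

/-- `O` as a set: the 2-element subsets of `M = Fin m`. -/
def Oset (m : ℕ) : Set (Finset (Fin m)) := {p | p.card = 2}

/-- `O` as a type: the 2-element subsets of `M = Fin m`. -/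
abbrev OO (m : ℕ) := {p : Finset (Fin m) // p.card = 2}

/-- `P` as a type. -/
abbrev PP (m q : ℕ) := {α : Ptn m // α ∈ Pset m q}

noncomputable instance (m q : ℕ) : Fintype (PP m q) := Fintype.ofFinite _

/-- The canonical action of `S(M)` on partitions: `g({c₁,…,cₜ}) = {g(c₁),…,g(cₜ)}`. -/
def permPart {m : ℕ} (g : Equiv.Perm (Fin m)) (α : Ptn m) : Ptn m :=
  α.image fun c => c.image g

/-- The canonical action of `S(M)` on subsets of `M`. -/
def permPair {m : ℕ} (g : Equiv.Perm (Fin m)) (p : Finset (Fin m)) : Finset (Fin m) :=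
  p.image g

/-- `H` is closed under the action `act` on `S` if every `g` that maps each
`H`-orbit of `S` onto itself belongs to `H`. -/
def ClosedUnder {m : ℕ} {X : Type*} (act : Equiv.Perm (Fin m) → X → X) (S : Set X)
    (H : Set (Equiv.Perm (Fin m))) : Prop :=
  ∀ g : Equiv.Perm (Fin m), (∀ x ∈ S, ∃ h ∈ H, act g x = act h x) → g ∈ H

section Code

variable {m n : ℕ} {A : Type*} [Fintype A] [DecidableEq A]

/-- A map `h : Aⁿ → Aⁿ` is monomial if `h(a) = (σ₁(a_{π(1)}), …, σₙ(a_{π(n)}))`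
for a permutation `π ∈ Sₙ` and permutations `σ₁,…,σₙ` of `A`. -/
def IsMonomial (h : (Fin n → A) → (Fin n → A)) : Prop :=
  ∃ (π : Equiv.Perm (Fin n)) (σ : Fin n → Equiv.Perm A),
    ∀ (a : Fin n → A) (k : Fin n), h a k = σ k (a (π k))

/-- `Iso(C)`: the permutations `g` of the messages such that `λ ∘ g ∘ λ⁻¹` is a
Hamming isometry of the code encoded by `lam`. -/
def IsoSet (lam : Fin m → Fin n → A) : Set (Equiv.Perm (Fin m)) :=
  {g | ∀ i j : Fin m, hammingDist (lam (g i)) (lam (g j)) = hammingDist (lam i) (lam j)}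

/-- `Mon(C)`: the elements of `Iso(C)` such that `λ ∘ g ∘ λ⁻¹` extends to a
monomial map of `Aⁿ`. -/
def MonSet (lam : Fin m → Fin n → A) : Set (Equiv.Perm (Fin m)) :=
  {g | g ∈ IsoSet lam ∧
    ∃ h : (Fin n → A) → (Fin n → A), IsMonomial h ∧ ∀ i : Fin m, h (lam i) = lam (g i)}

/-- `Ψ(x) = {x⁻¹(a) : a ∈ A} ∖ {∅}`, the partition of `M` induced by `x : M → A`. -/
def PsiF (x : Fin m → A) : Ptn m :=
  (Finset.univ.image fun a : A => Finset.univ.filter fun i : Fin m => x i = a).erase ∅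

/-- The multiplicity function `η_λ(α) = |{k : Ψ(λ_k) = α}|`. -/
def eta (lam : Fin m → Fin n → A) (α : Ptn m) : ℚ :=
  (((Finset.univ : Finset (Fin n)).filter fun k => PsiF (fun i => lam i k) = α).card : ℚ)

/-- The multiplicity function, restricted to `P`. -/
def etaP (q : ℕ) (lam : Fin m → Fin n → A) : PP m q → ℚ := fun α => eta lam α.1

end Code

open Classical in
/-- `Δ_α({i,j}) = 0` if `i` and `j` lie in the same class of `α`, and `1` otherwise. -/
noncomputable def Delta {m q : ℕ} (α : PP m q) (p : OO m) : ℚ :=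
  if ∃ c ∈ α.1, p.1 ⊆ c then 0 else 1

/-- The linear map `W : F(P,ℚ) → F(O,ℚ)`, `W(η)(p) = Σ_{α∈P} η(α)Δ_α(p)`. -/
noncomputable def WLin (m q : ℕ) : (PP m q → ℚ) →ₗ[ℚ] (OO m → ℚ) where
  toFun η := fun p => ∑ α : PP m q, η α * Delta α p
  map_add' x y := by
    funext p
    simp [add_mul, Finset.sum_add_distrib]
  map_smul' c x := by
    funext p
    simp [Finset.mul_sum, mul_assoc]

/-- The matrix `B`: `B_{p,t} = 1` if `|p ∩ t| = 1`, and `0` otherwise. -/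
def Bmat (m : ℕ) : Matrix (OO m) (OO m) ℚ :=
  Matrix.of fun p t => if (p.1 ∩ t.1).card = 1 then 1 else 0

/-- The matrix `D`: `2(m−2)(m−4)·D_{p,t}` equals `−m²+8m−14` if `p = t`,
`m−4` if `|p∩t| = 1`, and `−2` if `p ∩ t = ∅`. -/
def Dmat (m : ℕ) : Matrix (OO m) (OO m) ℚ :=
  Matrix.of fun p t =>
    (if p = t then -(m : ℚ) ^ 2 + 8 * m - 14
      else if (p.1 ∩ t.1).card = 1 then (m : ℚ) - 4 else -2) /
      (2 * ((m : ℚ) - 2) * ((m : ℚ) - 4))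

/-- `ξ_x = Σ_{r∈O} x(r) Σ_{p∈O} D_{r,p} · id_{{p, M∖p}}`. -/
noncomputable def xi (m q : ℕ) (x : OO m → ℚ) : PP m q → ℚ := fun α =>
  ∑ r : OO m, x r * ∑ p : OO m, Dmat m r p * (if α.1 = ({p.1, p.1ᶜ} : Ptn m) then 1 else 0)

/-- `ζ_α = id_α − ξ_{Δ_α}`. -/
noncomputable def zeta (m q : ℕ) (α : PP m q) : PP m q → ℚ :=
  (fun β => if β = α then 1 else 0) - xi m q fun p => Delta α p

/-- `V₀`: the functions in `F(P,ℚ)` vanishing on `P ∖ P₂`. -/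
def V0 (m q : ℕ) : Set (PP m q → ℚ) :=
  {η | ∀ α : PP m q, (α : Ptn m) ∉ P2set m → η α = 0}

open Classical in
/-- `id_{P₂} = Σ_{α∈P₂} id_α`. -/
noncomputable def idP2 (m q : ℕ) : PP m q → ℚ := fun α =>
  if (α : Ptn m) ∈ P2set m then 1 else 0

theorem permPart_mem_Pset {m q : ℕ} (g : Equiv.Perm (Fin m)) {α : Ptn m}
    (hα : α ∈ Pset m q) : permPart g α ∈ Pset m q := by
  obtain ⟨⟨hne, huniq⟩, hcard⟩ := hα
  refine ⟨⟨?_, ?_⟩, le_trans Finset.card_image_le hcard⟩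
  · intro c hc
    simp only [permPart, Finset.mem_image] at hc
    obtain ⟨d, hd, rfl⟩ := hc
    exact (hne d hd).image g
  · intro i
    obtain ⟨c, ⟨hc, hic⟩, hun⟩ := huniq (g.symm i)
    refine ⟨c.image g, ⟨?_, ?_⟩, ?_⟩
    · simp only [permPart, Finset.mem_image]
      exact ⟨c, hc, rfl⟩
    · exact Finset.mem_image.2 ⟨g.symm i, hic, g.apply_symm_apply i⟩
    · rintro d ⟨hd, hid⟩
      simp only [permPart, Finset.mem_image] at hd
      obtain ⟨e, he, rfl⟩ := hd
      rw [Finset.mem_image] at hid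
      obtain ⟨j, hj, hji⟩ := hid
      have hjs : j = g.symm i := by
        apply g.injective
        rw [hji, g.apply_symm_apply]
      subst hjs
      rw [hun e ⟨he, hj⟩]

/-- The action of `S(M)` on `P`. -/
def permPP {m q : ℕ} (g : Equiv.Perm (Fin m)) (α : PP m q) : PP m q :=
  ⟨permPart g α.1, permPart_mem_Pset g α.2⟩

/-- The action of `S(M)` on `F(P,ℚ)`: `g(η)(α) = η(g⁻¹(α))`. -/
def permF {m q : ℕ} (g : Equiv.Perm (Fin m)) (η : PP m q → ℚ) : PP m q → ℚ :=
  fun α => η (permPP g⁻¹ α)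

/-- `Stab(η) = {g ∈ S(M) : g(η) = η}`. -/
def StabSet {m q : ℕ} (η : PP m q → ℚ) : Set (Equiv.Perm (Fin m)) :=
  {g | permF g η = η}

/-- `Stab_W(η) = {g ∈ S(M) : W(g(η)) = W(η)}`. -/
def StabWSet (m q : ℕ) (η : PP m q → ℚ) : Set (Equiv.Perm (Fin m)) :=
  {g | WLin m q (permF g η) = WLin m q η}

/-! ### Auxiliary development -/

open Finset

section Aux

variable {m q : ℕ}

@[simp] lemma permPart_one (α : Ptn m) : permPart (1 : Equiv.Perm (Fin m)) α = α := by
  simp [permPart]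

lemma permPart_comp (g g' : Equiv.Perm (Fin m)) (α : Ptn m) :
    permPart g (permPart g' α) = permPart (g * g') α := by
  simp only [permPart, Finset.image_image]
  apply Finset.image_congr
  intro c _
  simp [Finset.image_image]

@[simp] lemma permPart_inv_left (g : Equiv.Perm (Fin m)) (α : Ptn m) :
    permPart g⁻¹ (permPart g α) = α := by
  rw [permPart_comp, inv_mul_cancel, permPart_one]

@[simp] lemma permPart_inv_right (g : Equiv.Perm (Fin m)) (α : Ptn m) :
    permPart g (permPart g⁻¹ α) = α := by
  rw [permPart_comp, mul_inv_cancel, permPart_one]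

lemma image_compl_perm (g : Equiv.Perm (Fin m)) (p : Finset (Fin m)) :
    pᶜ.image g = (p.image g)ᶜ := by
  ext x
  simp only [Finset.mem_image, Finset.mem_compl]
  constructor
  · rintro ⟨y, hy, rfl⟩ ⟨z, hz, hzy⟩
    exact hy (g.injective hzy ▸ hz)
  · intro hx
    refine ⟨g⁻¹ x, fun hmem => hx ⟨g⁻¹ x, hmem, by simp⟩, by simp⟩

lemma permPart_pair (g : Equiv.Perm (Fin m)) (p : Finset (Fin m)) :
    permPart g {p, pᶜ} = {p.image g, (p.image g)ᶜ} := by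
  simp [permPart, Finset.image_insert, Finset.image_singleton, image_compl_perm]

lemma P2set_perm {α : Ptn m} (g : Equiv.Perm (Fin m)) (h : α ∈ P2set m) :
    permPart g α ∈ P2set m := by
  obtain ⟨p, hp, rfl⟩ := h
  exact ⟨p.image g, by rw [Finset.card_image_of_injective _ g.injective, hp],
    permPart_pair g p⟩

lemma P2set_perm_iff {α : Ptn m} (g : Equiv.Perm (Fin m)) :
    permPart g α ∈ P2set m ↔ α ∈ P2set m := by
  constructor
  · intro h
    have := P2set_perm g⁻¹ h
    rwa [permPart_inv_left] at this
  · exact P2set_perm g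

@[simp] lemma permPP_coe (g : Equiv.Perm (Fin m)) (α : PP m q) :
    (permPP g α : Ptn m) = permPart g α.1 := rfl

@[simp] lemma permPP_inv_left (g : Equiv.Perm (Fin m)) (α : PP m q) :
    permPP g⁻¹ (permPP g α) = α := Subtype.ext (by simp)

@[simp] lemma permPP_inv_right (g : Equiv.Perm (Fin m)) (α : PP m q) :
    permPP g (permPP g⁻¹ α) = α := Subtype.ext (by simp)

/-- `permPP g` as an equivalence. -/
def permPPEquiv (g : Equiv.Perm (Fin m)) : PP m q ≃ PP m q where
  toFun := permPP g
  invFun := permPP g⁻¹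
  left_inv := permPP_inv_left g
  right_inv := permPP_inv_right g

lemma permF_one (η : PP m q → ℚ) : permF (1 : Equiv.Perm (Fin m)) η = η := by
  funext α
  simp [permF, permPP]

lemma permF_mul (g g' : Equiv.Perm (Fin m)) (η : PP m q → ℚ) :
    permF (g * g') η = permF g (permF g' η) := by
  funext α
  simp only [permF]
  congr 1
  exact Subtype.ext (by simp [mul_inv_rev, ← permPart_comp])

end Aux

section PsiAux

variable {m : ℕ} {A : Type*} [Fintype A] [DecidableEq A]

lemma psiF_eq_image (x : Fin m → A) :
    PsiF x = Finset.univ.image (fun i : Fin m => Finset.univ.filter fun j => x j = x i) := by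
  ext c
  simp only [PsiF, Finset.mem_erase, Finset.mem_image, Finset.mem_univ, true_and]
  constructor
  · rintro ⟨hne, a, ha⟩
    obtain ⟨i, hi⟩ := Finset.nonempty_iff_ne_empty.2 hne
    refine ⟨i, ?_⟩
    have hxi : x i = a := by
      have := hi
      rw [← ha, Finset.mem_filter] at this
      exact this.2
    rw [← ha, hxi]
  · rintro ⟨i, rfl⟩
    refine ⟨?_, x i, rfl⟩
    intro hc
    have : i ∈ (∅ : Finset (Fin m)) := by
      rw [← hc]; simp
    simp at this

lemma fiber_mem_psiF (x : Fin m → A) (i : Fin m) :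
    (Finset.univ.filter fun j => x j = x i) ∈ PsiF x := by
  rw [psiF_eq_image]
  exact Finset.mem_image_of_mem _ (Finset.mem_univ i)

lemma psiF_mem_Pset (x : Fin m → A) : PsiF x ∈ Pset m (Fintype.card A) := by
  refine ⟨⟨?_, ?_⟩, ?_⟩
  · intro c hc
    rw [psiF_eq_image] at hc
    obtain ⟨i, _, rfl⟩ := Finset.mem_image.1 hc
    exact ⟨i, by simp⟩
  · intro i
    refine ⟨Finset.univ.filter fun j => x j = x i, ⟨fiber_mem_psiF x i, by simp⟩, ?_⟩
    rintro c ⟨hc, hic⟩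
    rw [psiF_eq_image] at hc
    obtain ⟨j, _, rfl⟩ := Finset.mem_image.1 hc
    have : x i = x j := by simpa using hic
    ext k
    simp [this]
  · calc (PsiF x).card ≤ ((Finset.univ : Finset A).image
          fun a => Finset.univ.filter fun i : Fin m => x i = a).card :=
        Finset.card_erase_le
    _ ≤ (Finset.univ : Finset A).card := Finset.card_image_le
    _ = Fintype.card A := rfl

lemma eq_iff_of_psiF_eq {x y : Fin m → A} (h : PsiF x = PsiF y) (i j : Fin m) :
    x i = x j ↔ y i = y j := by
  have key : ∀ (u v : Fin m → A), PsiF u = PsiF v → ∀ a b, u a = u b → v a = v b := by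
    intro u v huv a b hab
    have hc : (Finset.univ.filter fun k => u k = u a) ∈ PsiF v := by
      rw [← huv]; exact fiber_mem_psiF u a
    simp only [PsiF, Finset.mem_erase, Finset.mem_image, Finset.mem_univ, true_and] at hc
    obtain ⟨-, c, hc⟩ := hc
    have ha : v a = c := by
      have : a ∈ Finset.univ.filter fun k => u k = u a := by simp
      rw [← hc, Finset.mem_filter] at this; exact this.2
    have hb : v b = c := by
      have : b ∈ Finset.univ.filter fun k => u k = u a := by simp [hab]
      rw [← hc, Finset.mem_filter] at this; exact this.2
    rw [ha, hb]
  exact ⟨key x y h i j, key y x h.symm i j⟩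

lemma psiF_eq_of_iff {x y : Fin m → A} (h : ∀ i j, x i = x j ↔ y i = y j) :
    PsiF x = PsiF y := by
  rw [psiF_eq_image, psiF_eq_image]
  apply Finset.image_congr
  intro i _
  ext j
  simp [h]

lemma psiF_comp_perm (x : Fin m → A) (g : Equiv.Perm (Fin m)) :
    PsiF (fun i => x (g i)) = permPart g⁻¹ (PsiF x) := by
  rw [psiF_eq_image, psiF_eq_image, permPart, Finset.image_image]
  have hkey : ∀ i : Fin m, (Finset.univ.filter fun j => x (g j) = x (g i))
      = (Finset.univ.filter fun j => x j = x (g i)).image ⇑g⁻¹ := by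
    intro i
    ext j
    simp only [Finset.mem_filter, Finset.mem_univ, true_and, Finset.mem_image]
    constructor
    · intro hj; exact ⟨g j, hj, by simp⟩
    · rintro ⟨j', hj', rfl⟩; simpa using hj'
  ext c
  simp only [Finset.mem_image, Finset.mem_univ, true_and, Function.comp]
  constructor
  · rintro ⟨i, rfl⟩
    exact ⟨g i, (hkey i).symm⟩
  · rintro ⟨i, rfl⟩
    refine ⟨g⁻¹ i, ?_⟩
    have := hkey (g⁻¹ i)
    simpa using this

end PsiAux

section EtaAux

variable {m n q : ℕ} {A : Type*} [Fintype A] [DecidableEq A]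

/-- The partition of the messages induced by column `k`. -/
def fCol (lam : Fin m → Fin n → A) (k : Fin n) : Ptn m := PsiF (fun i => lam i k)

lemma eta_eq_card (lam : Fin m → Fin n → A) (α : Ptn m) :
    eta lam α = ((Finset.univ.filter fun k => fCol lam k = α).card : ℚ) := rfl

lemma eta_perm_of_monomial {lam : Fin m → Fin n → A} {g : Equiv.Perm (Fin m)}
    (hg : g ∈ MonSet lam) (β : Ptn m) :
    eta lam (permPart g β) = eta lam β := by
  obtain ⟨-, h, ⟨π, σ, hmono⟩, hext⟩ := hg
  have hcol : ∀ k : Fin n, permPart g⁻¹ (fCol lam k) = fCol lam (π k) := by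
    intro k
    have h1 : PsiF (fun i => lam (g i) k) = permPart g⁻¹ (fCol lam k) :=
      psiF_comp_perm (fun i => lam i k) g
    have h2 : PsiF (fun i => lam (g i) k) = fCol lam (π k) := by
      apply psiF_eq_of_iff
      intro i j
      have hi : lam (g i) k = σ k (lam i (π k)) := by rw [← hext i, hmono]
      have hj : lam (g j) k = σ k (lam j (π k)) := by rw [← hext j, hmono]
      rw [hi, hj]
      exact ⟨fun hh => (σ k).injective hh, fun hh => by rw [hh]⟩
    rw [← h1, h2]
  rw [eta_eq_card, eta_eq_card]
  congr 1
  have hiff : ∀ k, fCol lam k = permPart g β ↔ permPart g⁻¹ (fCol lam k) = β := by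
    intro k
    constructor
    · intro hk; rw [hk, permPart_inv_left]
    · intro hk; rw [← hk, permPart_inv_right]
  rw [show (Finset.univ.filter fun k => fCol lam k = permPart g β)
      = Finset.univ.filter fun k => fCol lam (π k) = β by
    ext k; simp only [Finset.mem_filter, Finset.mem_univ, true_and]
    rw [hiff k, hcol k]]
  apply Finset.card_bij (fun k _ => π k)
  · intro k hk
    simp only [Finset.mem_filter, Finset.mem_univ, true_and] at hk ⊢
    exact hk
  · intro a _ b _ hab
    exact π.injective hab
  · intro b hb
    refine ⟨π⁻¹ b, ?_, by simp⟩
    simp only [Finset.mem_filter, Finset.mem_univ, true_and] at hb ⊢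
    simpa using hb

lemma mon_mem_stab {lam : Fin m → Fin n → A} {g : Equiv.Perm (Fin m)}
    (hg : g ∈ MonSet lam) : permF g (etaP q lam) = etaP q lam := by
  funext α
  show eta lam (permPart g⁻¹ α.1) = eta lam α.1
  have := eta_perm_of_monomial hg (permPart g⁻¹ α.1)
  rw [permPart_inv_right] at this
  exact this.symm

end EtaAux

section WAux

variable {m n q : ℕ} {A : Type*} [Fintype A] [DecidableEq A]

/-- The action of a permutation on 2-element subsets. -/
def pairOO (g : Equiv.Perm (Fin m)) (t : OO m) : OO m :=
  ⟨t.1.image ⇑g, by rw [Finset.card_image_of_injective _ g.injective, t.2]⟩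

lemma WLin_apply (η : PP m q → ℚ) (t : OO m) :
    WLin m q η t = ∑ α : PP m q, η α * Delta α t := rfl

lemma Delta_perm (g : Equiv.Perm (Fin m)) (α : PP m q) (t : OO m) :
    Delta (permPP g α) t = Delta α (pairOO g⁻¹ t) := by
  classical
  have hiff : (∃ c ∈ (permPP g α).1, t.1 ⊆ c) ↔ ∃ c ∈ α.1, (pairOO g⁻¹ t).1 ⊆ c := by
    constructor
    · rintro ⟨c, hc, hsub⟩
      obtain ⟨d, hd, rfl⟩ := Finset.mem_image.1 hc
      refine ⟨d, hd, ?_⟩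
      intro x hx
      obtain ⟨y, hy, rfl⟩ := Finset.mem_image.1 hx
      have := hsub hy
      obtain ⟨z, hz, hzy⟩ := Finset.mem_image.1 this
      have : z = g⁻¹ y := by apply g.injective; simp [hzy]
      rwa [← this]
    · rintro ⟨c, hc, hsub⟩
      refine ⟨c.image ⇑g, Finset.mem_image_of_mem _ hc, ?_⟩
      intro x hx
      have : g⁻¹ x ∈ c := hsub (Finset.mem_image_of_mem _ hx)
      exact Finset.mem_image.2 ⟨g⁻¹ x, this, by simp⟩
  rw [Delta, Delta]
  by_cases h : ∃ c ∈ α.1, (pairOO g⁻¹ t).1 ⊆ c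
  · rw [if_pos (hiff.2 h), if_pos h]
  · rw [if_neg (fun hh => h (hiff.1 hh)), if_neg h]

lemma W_perm (g : Equiv.Perm (Fin m)) (η : PP m q → ℚ) (t : OO m) :
    WLin m q (permF g η) t = WLin m q η (pairOO g⁻¹ t) := by
  rw [WLin_apply, WLin_apply]
  rw [← Equiv.sum_comp (permPPEquiv (m := m) (q := q) g)
    (fun α => permF g η α * Delta α t)]
  apply Finset.sum_congr rfl
  intro β _
  show permF g η (permPP g β) * Delta (permPP g β) t = _
  rw [Delta_perm]
  congr 1
  show η (permPP g⁻¹ (permPP g β)) = η β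
  rw [permPP_inv_left]

lemma delta_col (lam : Fin m → Fin n → A) (k : Fin n) {i j : Fin m} (hij : i ≠ j)
    (hk : fCol lam k ∈ Pset m q) (t : OO m) (ht : t.1 = {i, j}) :
    Delta (⟨fCol lam k, hk⟩ : PP m q) t = if lam i k = lam j k then 0 else 1 := by
  classical
  have hiff : (∃ c ∈ fCol lam k, t.1 ⊆ c) ↔ lam i k = lam j k := by
    rw [ht]
    constructor
    · rintro ⟨c, hc, hsub⟩
      simp only [fCol, PsiF, Finset.mem_erase, Finset.mem_image] at hc
      obtain ⟨-, a, -, rfl⟩ := hc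
      have hi : i ∈ Finset.univ.filter fun i' => lam i' k = a :=
        hsub (by simp)
      have hj : j ∈ Finset.univ.filter fun i' => lam i' k = a :=
        hsub (by simp)
      simp only [Finset.mem_filter] at hi hj
      rw [hi.2, hj.2]
    · intro hl
      refine ⟨Finset.univ.filter fun i' => lam i' k = lam i k,
        fiber_mem_psiF _ i, ?_⟩
      intro x hx
      simp only [Finset.mem_insert, Finset.mem_singleton] at hx
      rcases hx with rfl | rfl
      · simp
      · simp [hl]
  rw [Delta]
  by_cases h : lam i k = lam j k
  · rw [if_pos (hiff.2 h), if_pos h]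
  · rw [if_neg (fun hh => h (hiff.1 hh)), if_neg h]

lemma W_eta_eq_dist (lam : Fin m → Fin n → A) {i j : Fin m} (hij : i ≠ j)
    (t : OO m) (ht : t.1 = {i, j}) :
    WLin m (Fintype.card A) (etaP (Fintype.card A) lam) t
      = (hammingDist (lam i) (lam j) : ℚ) := by
  classical
  rw [WLin_apply]
  set q' := Fintype.card A
  have hmem : ∀ k : Fin n, fCol lam k ∈ Pset m q' := fun k => psiF_mem_Pset _
  set fP : Fin n → PP m q' := fun k => ⟨fCol lam k, hmem k⟩ with hfP
  have heta : ∀ α : PP m q', etaP q' lam α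
      = ((Finset.univ.filter fun k => fP k = α).card : ℚ) := by
    intro α
    rw [etaP, eta_eq_card]
    congr 2
    ext k
    simp only [Finset.mem_filter, Finset.mem_univ, true_and, hfP]
    exact ⟨fun h => Subtype.ext h, fun h => congrArg Subtype.val h⟩
  calc ∑ α : PP m q', etaP q' lam α * Delta α t
      = ∑ α : PP m q', ∑ k ∈ Finset.univ.filter fun k => fP k = α,
          Delta (fP k) t := by
        apply Finset.sum_congr rfl
        intro α _
        rw [heta α]
        rw [Finset.sum_congr rfl (fun k hk => by
          rw [(Finset.mem_filter.1 hk).2])]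
        rw [Finset.sum_const, nsmul_eq_mul]
    _ = ∑ k : Fin n, Delta (fP k) t := by
        exact Finset.sum_fiberwise_of_maps_to (fun k _ => Finset.mem_univ (fP k)) _
    _ = ∑ k : Fin n, if lam i k = lam j k then 0 else 1 := by
        apply Finset.sum_congr rfl
        intro k _
        exact delta_col lam k hij (hmem k) t ht
    _ = (hammingDist (lam i) (lam j) : ℚ) := by
        rw [hammingDist]
        rw [Finset.card_filter]
        push_cast
        apply Finset.sum_congr rfl
        intro k _
        by_cases h : lam i k = lam j k <;> simp [h]

end WAux

section CountAux

variable {m : ℕ}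

lemma inter_card_two_iff {r p : Finset (Fin m)} (hr : r.card = 2) (hp : p.card = 2) :
    (r ∩ p).card = 2 ↔ r = p := by
  constructor
  · intro h
    have h1 : r ∩ p = r := by
      apply Finset.eq_of_subset_of_card_le (Finset.inter_subset_left)
      omega
    have h2 : r ⊆ p := by rw [← h1]; exact Finset.inter_subset_right
    exact Finset.eq_of_subset_of_card_le h2 (by omega)
  · rintro rfl
    rw [Finset.inter_self]; exact hr

lemma inter_card_le_two {r p : Finset (Fin m)} (hp : p.card = 2) :
    (r ∩ p).card ≤ 2 := by
  calc (r ∩ p).card ≤ p.card := Finset.card_le_card Finset.inter_subset_right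
  _ = 2 := hp

lemma countK1 {t : Finset (Fin m)} (ht : t.card = 2) :
    (Finset.univ.filter fun r : Finset (Fin m) =>
      r.card = 2 ∧ (r ∩ t).card = 1).card = 2 * (m - 2) := by
  have : (t ×ˢ tᶜ).card = 2 * (m - 2) := by
    rw [Finset.card_product, ht, Finset.card_compl, ht, Fintype.card_fin]
  rw [← this]
  symm
  apply Finset.card_nbij (fun uv => ({uv.1, uv.2} : Finset (Fin m)))
  · intro uv huv
    rw [Finset.mem_coe, Finset.mem_product, Finset.mem_compl] at huv
    obtain ⟨hu, hv⟩ := huv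
    have hne : uv.1 ≠ uv.2 := fun h => hv (h ▸ hu)
    rw [Finset.mem_coe, Finset.mem_filter]
    refine ⟨Finset.mem_univ _, Finset.card_pair hne, ?_⟩
    have : ({uv.1, uv.2} : Finset (Fin m)) ∩ t = {uv.1} := by
      ext x
      simp only [Finset.mem_inter, Finset.mem_insert, Finset.mem_singleton]
      constructor
      · rintro ⟨rfl | rfl, hxt⟩
        · rfl
        · exact absurd hxt hv
      · rintro rfl; exact ⟨Or.inl rfl, hu⟩
    rw [this, Finset.card_singleton]
  · intro uv huv uv' huv' heq
    simp only [Finset.coe_product, Set.mem_prod, Finset.mem_coe, Finset.mem_compl] at huv huv'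
    have heq' : ({uv.1, uv.2} : Finset (Fin m)) = {uv'.1, uv'.2} := heq
    have h1 : uv'.1 ∈ ({uv.1, uv.2} : Finset (Fin m)) := by
      rw [heq']; simp
    have h2 : uv'.2 ∈ ({uv.1, uv.2} : Finset (Fin m)) := by
      rw [heq']; simp
    simp only [Finset.mem_insert, Finset.mem_singleton] at h1 h2
    have e1 : uv'.1 = uv.1 := by
      rcases h1 with h | h
      · exact h
      · exact absurd (h ▸ huv'.1) huv.2
    have e2 : uv'.2 = uv.2 := by
      rcases h2 with h | h
      · exact absurd (h ▸ huv.1) huv'.2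
      · exact h
    exact (Prod.ext e1 e2).symm
  · intro r hr
    simp only [Finset.coe_filter, Finset.mem_univ, true_and, Set.mem_setOf_eq] at hr
    obtain ⟨hr2, hrt⟩ := hr
    obtain ⟨u, hu⟩ := Finset.card_eq_one.1 hrt
    obtain ⟨x, y, hxy, rfl⟩ := Finset.card_eq_two.1 hr2
    have hur : u ∈ ({x, y} : Finset (Fin m)) ∩ t := by rw [hu]; simp
    have hut : u ∈ t := (Finset.mem_inter.1 hur).2
    have humem : u = x ∨ u = y := by
      have := (Finset.mem_inter.1 hur).1
      simpa using this
    rcases humem with rfl | rfl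
    · have hyt : y ∉ t := by
        intro hyt
        have : y ∈ ({u, y} : Finset (Fin m)) ∩ t := by simp [hyt]
        rw [hu] at this
        exact hxy (Finset.mem_singleton.1 this).symm
      exact ⟨(u, y), by simp [Set.mem_prod, hut, hyt], rfl⟩
    · have hxt : x ∉ t := by
        intro hxt
        have : x ∈ ({x, u} : Finset (Fin m)) ∩ t := by simp [hxt]
        rw [hu] at this
        exact hxy (Finset.mem_singleton.1 this)
      exact ⟨(u, x), by simp [Set.mem_prod, hut, hxt], by rw [Finset.pair_comm]⟩

end CountAux

section CountAux2

variable {m : ℕ}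

/-- Decompose a 2-set containing a given element. -/
lemma pair_decomp {p : Finset (Fin m)} (hp : p.card = 2) {a : Fin m} (ha : a ∈ p) :
    ∃ b, b ≠ a ∧ p = {a, b} := by
  obtain ⟨x, y, hxy, rfl⟩ := Finset.card_eq_two.1 hp
  rcases Finset.mem_insert.1 ha with rfl | h
  · exact ⟨y, fun h => hxy h.symm, rfl⟩
  · rw [Finset.mem_singleton] at h
    subst h
    exact ⟨x, fun h => hxy h, Finset.pair_comm x a⟩

lemma countK3 (hm3 : 3 ≤ m) {p t : Finset (Fin m)} (hp : p.card = 2) (ht : t.card = 2)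
    (hpt : (p ∩ t).card = 1) :
    (Finset.univ.filter fun r : Finset (Fin m) =>
      r.card = 2 ∧ ((r ∩ t).card = 1 ∧ (r ∩ p).card = 1)).card = m - 2 := by
  classical
  obtain ⟨a, ha⟩ := Finset.card_eq_one.1 hpt
  have hap : a ∈ p := (Finset.mem_inter.1 (ha ▸ Finset.mem_singleton_self a)).1
  have hat : a ∈ t := (Finset.mem_inter.1 (ha ▸ Finset.mem_singleton_self a)).2
  obtain ⟨b, hba, hpab⟩ := pair_decomp hp hap
  obtain ⟨c, hca, htac⟩ := pair_decomp ht hat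
  have hbt : b ∉ t := by
    intro hbt
    have : b ∈ p ∩ t := Finset.mem_inter.2 ⟨hpab ▸ by simp, hbt⟩
    rw [ha, Finset.mem_singleton] at this
    exact hba this
  have hcp : c ∉ p := by
    intro hcp
    have : c ∈ p ∩ t := Finset.mem_inter.2 ⟨hcp, htac ▸ by simp⟩
    rw [ha, Finset.mem_singleton] at this
    exact hca this
  have hbc : b ≠ c := fun h => hbt (h ▸ htac ▸ by simp)
  set T := Finset.univ.filter fun r : Finset (Fin m) =>
    r.card = 2 ∧ ((r ∩ t).card = 1 ∧ (r ∩ p).card = 1) with hT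
  have hsplit := Finset.card_filter_add_card_filter_not
    (s := T) (p := fun r => a ∈ r)
  -- count of those containing a
  have h1 : (T.filter fun r => a ∈ r).card = m - 3 := by
    have hcompl : (({a, b, c} : Finset (Fin m))ᶜ).card = m - 3 := by
      rw [Finset.card_compl, Fintype.card_fin]
      congr 1
      rw [Finset.card_insert_of_notMem (by simp [hba.symm, hca.symm]),
        Finset.card_pair hbc]
    rw [← hcompl]
    symm
    apply Finset.card_nbij (fun v => ({a, v} : Finset (Fin m)))
    · intro v hv
      simp only [Finset.mem_coe, Finset.mem_compl, Finset.mem_insert, Finset.mem_singleton, not_or] at hv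
      obtain ⟨hva, hvb, hvc⟩ := hv
      have hav : a ≠ v := fun h => hva h.symm
      simp only [Finset.mem_coe, hT, Finset.mem_filter, Finset.mem_univ, true_and]
      refine ⟨⟨Finset.card_pair hav, ?_, ?_⟩, by simp⟩
      · have : ({a, v} : Finset (Fin m)) ∩ t = {a} := by
          rw [htac]
          ext x
          simp only [Finset.mem_inter, Finset.mem_insert, Finset.mem_singleton]
          constructor
          · rintro ⟨rfl | rfl, h2⟩
            · rfl
            · rcases h2 with rfl | rfl
              · exact absurd rfl hva
              · exact absurd rfl hvc
          · rintro rfl; exact ⟨Or.inl rfl, Or.inl rfl⟩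
        rw [this, Finset.card_singleton]
      · have : ({a, v} : Finset (Fin m)) ∩ p = {a} := by
          rw [hpab]
          ext x
          simp only [Finset.mem_inter, Finset.mem_insert, Finset.mem_singleton]
          constructor
          · rintro ⟨rfl | rfl, h2⟩
            · rfl
            · rcases h2 with rfl | rfl
              · exact absurd rfl hva
              · exact absurd rfl hvb
          · rintro rfl; exact ⟨Or.inl rfl, Or.inl rfl⟩
        rw [this, Finset.card_singleton]
    · intro v hv v' hv' heq
      have heq' : ({a, v} : Finset (Fin m)) = {a, v'} := heq
      simp only [Finset.mem_coe, Finset.mem_compl, Finset.mem_insert,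
        Finset.mem_singleton, not_or] at hv hv'
      have : v ∈ ({a, v'} : Finset (Fin m)) := by rw [← heq']; simp
      simp only [Finset.mem_insert, Finset.mem_singleton] at this
      rcases this with h | h
      · exact absurd h hv.1
      · exact h
    · intro r hr
      rw [Finset.mem_coe, Finset.mem_filter, hT, Finset.mem_filter] at hr
      obtain ⟨⟨-, hr2, hrt, hrp⟩, har⟩ := hr
      obtain ⟨v, hva, hre⟩ := pair_decomp hr2 har
      rw [hre] at hrt hrp
      have hvb : v ≠ b := by
        intro hvb'
        have hsub : p ⊆ ({a, v} : Finset (Fin m)) ∩ p := by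
          intro x hx
          refine Finset.mem_inter.2 ⟨?_, hx⟩
          rw [hvb']
          rw [hpab] at hx
          exact hx
        have := Finset.card_le_card hsub
        omega
      have hvc : v ≠ c := by
        intro hvc'
        have hsub : t ⊆ ({a, v} : Finset (Fin m)) ∩ t := by
          intro x hx
          refine Finset.mem_inter.2 ⟨?_, hx⟩
          rw [hvc']
          rw [htac] at hx
          exact hx
        have := Finset.card_le_card hsub
        omega
      refine ⟨v, ?_, hre.symm⟩
      simp only [Finset.mem_coe, Finset.mem_compl, Finset.mem_insert,
        Finset.mem_singleton, not_or]
      exact ⟨hva, hvb, hvc⟩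
  -- count of those not containing a
  have h2 : (T.filter fun r => ¬ a ∈ r).card = 1 := by
    have : (T.filter fun r => ¬ a ∈ r) = {({b, c} : Finset (Fin m))} := by
      ext r
      simp only [Finset.mem_filter, Finset.mem_singleton, hT, Finset.mem_univ, true_and]
      constructor
      · rintro ⟨⟨hr2, hrt, hrp⟩, har⟩
        obtain ⟨u, hu⟩ := Finset.card_eq_one.1 hrp
        have hup : u ∈ p := (Finset.mem_inter.1 (hu ▸ Finset.mem_singleton_self u)).2
        have hur : u ∈ r := (Finset.mem_inter.1 (hu ▸ Finset.mem_singleton_self u)).1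
        have hub : u = b := by
          rw [hpab, Finset.mem_insert, Finset.mem_singleton] at hup
          rcases hup with h | h
          · exact absurd (h ▸ hur) har
          · exact h
        obtain ⟨w, hw⟩ := Finset.card_eq_one.1 hrt
        have hwt : w ∈ t := (Finset.mem_inter.1 (hw ▸ Finset.mem_singleton_self w)).2
        have hwr : w ∈ r := (Finset.mem_inter.1 (hw ▸ Finset.mem_singleton_self w)).1
        have hwc : w = c := by
          rw [htac, Finset.mem_insert, Finset.mem_singleton] at hwt
          rcases hwt with h | h
          · exact absurd (h ▸ hwr) har
          · exact h
        subst hub hwc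
        have hsub : ({u, w} : Finset (Fin m)) ⊆ r := by
          intro x hx
          rw [Finset.mem_insert, Finset.mem_singleton] at hx
          rcases hx with rfl | rfl
          · exact hur
          · exact hwr
        symm
        apply Finset.eq_of_subset_of_card_le hsub
        rw [Finset.card_pair (by intro h; exact hbc h)]
        omega
      · rintro rfl
        have hint_t : ({b, c} : Finset (Fin m)) ∩ t = {c} := by
          rw [htac]
          ext x
          simp only [Finset.mem_inter, Finset.mem_insert, Finset.mem_singleton]
          constructor
          · rintro ⟨hx1, hx2⟩
            rcases hx1 with rfl | rfl
            · rcases hx2 with h | h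
              · exact absurd h hba
              · exact absurd h hbc
            · rfl
          · rintro rfl; exact ⟨Or.inr rfl, Or.inr rfl⟩
        have hint_p : ({b, c} : Finset (Fin m)) ∩ p = {b} := by
          rw [hpab]
          ext x
          simp only [Finset.mem_inter, Finset.mem_insert, Finset.mem_singleton]
          constructor
          · rintro ⟨hx1, hx2⟩
            rcases hx1 with rfl | rfl
            · rfl
            · rcases hx2 with h | h
              · exact absurd h hca
              · exact absurd h (Ne.symm hbc)
          · rintro rfl; exact ⟨Or.inl rfl, Or.inr rfl⟩
        refine ⟨⟨Finset.card_pair hbc, ?_, ?_⟩, ?_⟩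
        · rw [hint_t, Finset.card_singleton]
        · rw [hint_p, Finset.card_singleton]
        · simp only [Finset.mem_insert, Finset.mem_singleton, not_or]
          exact ⟨fun h => hba h.symm, fun h => hca h.symm⟩
    rw [this, Finset.card_singleton]
  omega

lemma countK4 {p t : Finset (Fin m)} (hp : p.card = 2) (ht : t.card = 2)
    (hpt : (p ∩ t).card = 0) :
    (Finset.univ.filter fun r : Finset (Fin m) =>
      r.card = 2 ∧ ((r ∩ t).card = 1 ∧ (r ∩ p).card = 1)).card = 4 := by
  classical
  have hdisj : p ∩ t = ∅ := Finset.card_eq_zero.1 hpt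
  have hcard : (p ×ˢ t).card = 4 := by
    rw [Finset.card_product, hp, ht]
  rw [← hcard]
  symm
  apply Finset.card_nbij (fun uv => ({uv.1, uv.2} : Finset (Fin m)))
  · intro uv huv
    rw [Finset.mem_coe, Finset.mem_product] at huv
    obtain ⟨hu, hv⟩ := huv
    have hvp : uv.2 ∉ p := by
      intro h
      have : uv.2 ∈ p ∩ t := Finset.mem_inter.2 ⟨h, hv⟩
      rw [hdisj] at this; exact absurd this (Finset.notMem_empty _)
    have hut : uv.1 ∉ t := by
      intro h
      have : uv.1 ∈ p ∩ t := Finset.mem_inter.2 ⟨hu, h⟩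
      rw [hdisj] at this; exact absurd this (Finset.notMem_empty _)
    have hne : uv.1 ≠ uv.2 := fun h => hvp (h ▸ hu)
    rw [Finset.mem_coe, Finset.mem_filter]
    refine ⟨Finset.mem_univ _, Finset.card_pair hne, ?_, ?_⟩
    · have : ({uv.1, uv.2} : Finset (Fin m)) ∩ t = {uv.2} := by
        ext x
        simp only [Finset.mem_inter, Finset.mem_insert, Finset.mem_singleton]
        constructor
        · rintro ⟨rfl | rfl, hxt⟩
          · exact absurd hxt hut
          · rfl
        · rintro rfl; exact ⟨Or.inr rfl, hv⟩
      rw [this, Finset.card_singleton]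
    · have : ({uv.1, uv.2} : Finset (Fin m)) ∩ p = {uv.1} := by
        ext x
        simp only [Finset.mem_inter, Finset.mem_insert, Finset.mem_singleton]
        constructor
        · rintro ⟨rfl | rfl, hxp⟩
          · rfl
          · exact absurd hxp hvp
        · rintro rfl; exact ⟨Or.inl rfl, hu⟩
      rw [this, Finset.card_singleton]
  · intro uv huv uv' huv' heq
    have heq' : ({uv.1, uv.2} : Finset (Fin m)) = {uv'.1, uv'.2} := heq
    simp only [Finset.coe_product, Set.mem_prod, Finset.mem_coe] at huv huv'
    have h1 : uv'.1 ∈ ({uv.1, uv.2} : Finset (Fin m)) := by rw [heq']; simp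
    have h2 : uv'.2 ∈ ({uv.1, uv.2} : Finset (Fin m)) := by rw [heq']; simp
    simp only [Finset.mem_insert, Finset.mem_singleton] at h1 h2
    have e1 : uv'.1 = uv.1 := by
      rcases h1 with h | h
      · exact h
      · exfalso
        have : uv'.1 ∈ p ∩ t := Finset.mem_inter.2 ⟨huv'.1, h ▸ huv.2⟩
        rw [hdisj] at this; exact absurd this (Finset.notMem_empty _)
    have e2 : uv'.2 = uv.2 := by
      rcases h2 with h | h
      · exfalso
        have : uv'.2 ∈ p ∩ t := Finset.mem_inter.2 ⟨h ▸ huv.1, huv'.2⟩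
        rw [hdisj] at this; exact absurd this (Finset.notMem_empty _)
      · exact h
    exact (Prod.ext e1 e2).symm
  · intro r hr
    simp only [Finset.coe_filter, Finset.mem_univ, true_and, Set.mem_setOf_eq] at hr
    obtain ⟨hr2, hrt, hrp⟩ := hr
    obtain ⟨u, hu⟩ := Finset.card_eq_one.1 hrp
    obtain ⟨w, hw⟩ := Finset.card_eq_one.1 hrt
    have hup : u ∈ p := (Finset.mem_inter.1 (hu ▸ Finset.mem_singleton_self u)).2
    have hur : u ∈ r := (Finset.mem_inter.1 (hu ▸ Finset.mem_singleton_self u)).1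
    have hwt : w ∈ t := (Finset.mem_inter.1 (hw ▸ Finset.mem_singleton_self w)).2
    have hwr : w ∈ r := (Finset.mem_inter.1 (hw ▸ Finset.mem_singleton_self w)).1
    have huw : u ≠ w := by
      intro h
      have : u ∈ p ∩ t := Finset.mem_inter.2 ⟨hup, h ▸ hwt⟩
      rw [hdisj] at this; exact absurd this (Finset.notMem_empty _)
    have hsub : ({u, w} : Finset (Fin m)) ⊆ r := by
      intro x hx
      rw [Finset.mem_insert, Finset.mem_singleton] at hx
      rcases hx with rfl | rfl
      · exact hur
      · exact hwr
    have hr_eq : r = {u, w} := by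
      symm
      apply Finset.eq_of_subset_of_card_le hsub
      rw [Finset.card_pair huw]; omega
    exact ⟨(u, w), by simp [Set.mem_prod, hup, hwt], hr_eq.symm⟩

end CountAux2

section DBAux

variable {m : ℕ}

lemma card_OO_filter (Q : Finset (Fin m) → Prop) [DecidablePred Q] :
    (Finset.univ.filter fun r : OO m => Q r.1).card
      = (Finset.univ.filter fun r : Finset (Fin m) => r.card = 2 ∧ Q r).card := by
  apply Finset.card_nbij (fun r => r.1)
  · intro r hr
    rw [Finset.mem_coe, Finset.mem_filter] at hr
    rw [Finset.mem_coe, Finset.mem_filter]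
    exact ⟨Finset.mem_univ _, r.2, hr.2⟩
  · intro r _ r' _ h
    exact Subtype.ext h
  · intro r hr
    rw [Finset.mem_coe, Finset.mem_filter] at hr
    exact ⟨⟨r, hr.2.1⟩, by simp [hr.2.2], rfl⟩

lemma DB_apply (hm : 5 ≤ m ∨ m = 3) (p t : OO m) :
    ∑ r : OO m, Dmat m p r * Bmat m r t = if p = t then 1 else 0 := by
  classical
  have hm3 : 3 ≤ m := by rcases hm with h | h <;> omega
  have hm2c : ((m : ℚ) - 2) ≠ 0 := by
    intro h
    have : (m : ℚ) = 2 := by linarith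
    have : m = 2 := by exact_mod_cast this
    omega
  have hm4c : ((m : ℚ) - 4) ≠ 0 := by
    intro h
    have : (m : ℚ) = 4 := by linarith
    have : m = 4 := by exact_mod_cast this
    rcases hm with h' | h' <;> omega
  have hden : 2 * ((m : ℚ) - 2) * ((m : ℚ) - 4) ≠ 0 := by
    apply mul_ne_zero (mul_ne_zero two_ne_zero hm2c) hm4c
  set u : ℚ := (m : ℚ) with hu
  set den : ℚ := 2 * (u - 2) * (u - 4) with hdeneq
  -- numerator function
  set Nf : OO m → ℚ := fun r =>
    if p = r then -u ^ 2 + 8 * u - 14 else if (p.1 ∩ r.1).card = 1 then u - 4 else -2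
    with hNf
  have hD : ∀ r : OO m, Dmat m p r = Nf r / den := fun r => rfl
  have hstep : ∀ r : OO m, Dmat m p r * Bmat m r t
      = (if (r.1 ∩ t.1).card = 1 then Nf r else 0) / den := by
    intro r
    rw [hD, Bmat]
    by_cases hc : (r.1 ∩ t.1).card = 1
    · rw [if_pos hc, Matrix.of_apply, if_pos hc, mul_one]
    · rw [if_neg hc, Matrix.of_apply, if_neg hc, mul_zero, zero_div]
  rw [Finset.sum_congr rfl fun r _ => hstep r, ← Finset.sum_div]
  -- expand Nf
  have hexp : ∀ r : OO m, (r.1 ∩ t.1).card = 1 → Nf r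
      = (-u ^ 2 + 8 * u - 12) * (if r = p then 1 else 0)
        + (u - 2) * (if (r.1 ∩ p.1).card = 1 then 1 else 0) + (-2) := by
    intro r _
    by_cases hrp : p = r
    · subst hrp
      have h2 : (p.1 ∩ p.1).card = 2 := by rw [Finset.inter_self]; exact p.2
      simp only [hNf, if_pos rfl, h2, eq_self_iff_true, if_true]
      norm_num
      ring
    · have hpr' : ¬ r = p := fun h => hrp h.symm
      by_cases h1 : (p.1 ∩ r.1).card = 1
      · have h1' : (r.1 ∩ p.1).card = 1 := by rwa [Finset.inter_comm]
        simp only [hNf, if_neg hrp, if_pos h1, if_neg hpr', if_pos h1']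
        ring
      · have h1' : ¬ (r.1 ∩ p.1).card = 1 := by rwa [Finset.inter_comm]
        simp only [hNf, if_neg hrp, if_neg h1, if_neg hpr', if_neg h1']
        ring
  have hsum : (∑ r : OO m, if (r.1 ∩ t.1).card = 1 then Nf r else 0)
      = ∑ r ∈ Finset.univ.filter (fun r : OO m => (r.1 ∩ t.1).card = 1), Nf r :=
    (Finset.sum_filter _ _).symm
  rw [hsum]
  set S := Finset.univ.filter (fun r : OO m => (r.1 ∩ t.1).card = 1) with hS
  rw [Finset.sum_congr rfl fun r hr => hexp r (by
    rw [hS, Finset.mem_filter] at hr; exact hr.2)]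
  rw [Finset.sum_add_distrib, Finset.sum_add_distrib, ← Finset.mul_sum, ← Finset.mul_sum,
    Finset.sum_const, Finset.sum_ite_eq' S p (fun _ => (1 : ℚ))]
  have hSmem : (p ∈ S) ↔ (p.1 ∩ t.1).card = 1 := by
    rw [hS, Finset.mem_filter]
    simp
  have hcount1 : (S.card : ℚ) = 2 * (u - 2) := by
    rw [hS, card_OO_filter (fun r => (r ∩ t.1).card = 1), countK1 t.2]
    push_cast [Nat.cast_sub (by omega : 2 ≤ m)]
    ring
  have hfilter11 : (S.filter fun r : OO m => (r.1 ∩ p.1).card = 1)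
      = Finset.univ.filter fun r : OO m => (r.1 ∩ t.1).card = 1 ∧ (r.1 ∩ p.1).card = 1 := by
    rw [hS, Finset.filter_filter]
  have hsum11 : (∑ r ∈ S, if (r.1 ∩ p.1).card = 1 then (1:ℚ) else 0)
      = ((S.filter fun r : OO m => (r.1 ∩ p.1).card = 1).card : ℚ) := by
    rw [Finset.sum_boole]
  rw [hsum11, hfilter11]
  rw [card_OO_filter (fun r => (r ∩ t.1).card = 1 ∧ (r ∩ p.1).card = 1)]
  rw [nsmul_eq_mul]
  by_cases hpt : p = t
  · subst hpt
    have h2 : (p.1 ∩ p.1).card = 2 := by rw [Finset.inter_self]; exact p.2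
    rw [if_neg (by rw [hSmem, h2]; omega), if_pos rfl]
    have : (Finset.univ.filter fun r : Finset (Fin m) =>
        r.card = 2 ∧ ((r ∩ p.1).card = 1 ∧ (r ∩ p.1).card = 1)).card = 2 * (m - 2) := by
      rw [Finset.filter_congr (fun r _ => by
        simp [and_self] :
        ∀ r ∈ (Finset.univ : Finset (Finset (Fin m))),
          (r.card = 2 ∧ ((r ∩ p.1).card = 1 ∧ (r ∩ p.1).card = 1))
            ↔ (r.card = 2 ∧ (r ∩ p.1).card = 1))]
      exact countK1 p.2
    rw [this]
    have hs : (S.card : ℚ) = 2 * (u - 2) := hcount1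
    rw [hs]
    push_cast [Nat.cast_sub (by omega : 2 ≤ m)]
    field_simp
    ring
  · rw [if_neg hpt]
    have hne2 : (p.1 ∩ t.1).card ≠ 2 := by
      intro h
      exact hpt (Subtype.ext ((inter_card_two_iff p.2 t.2).1 h))
    have hle2 : (p.1 ∩ t.1).card ≤ 2 := inter_card_le_two t.2
    have hcases : (p.1 ∩ t.1).card = 0 ∨ (p.1 ∩ t.1).card = 1 := by omega
    rcases hcases with h0 | h1
    · rw [if_neg (by rw [hSmem, h0]; omega)]
      rw [countK4 p.2 t.2 h0]
      rw [hcount1]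
      push_cast
      field_simp
      ring
    · rw [if_pos (hSmem.2 h1)]
      rw [countK3 hm3 p.2 t.2 h1]
      rw [hcount1]
      push_cast [Nat.cast_sub (by omega : 2 ≤ m)]
      field_simp
      ring

end DBAux

section V0Aux

variable {m q : ℕ}

lemma Bmat_symm (p t : OO m) : Bmat m p t = Bmat m t p := by
  unfold Bmat
  rw [Matrix.of_apply, Matrix.of_apply, Finset.inter_comm]

lemma pairPart_mem_Pset (hm3 : 3 ≤ m) (hq : 2 ≤ q) (p : OO m) :
    ({p.1, p.1ᶜ} : Ptn m) ∈ Pset m q := by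
  have hcompl : (p.1ᶜ).card = m - 2 := by
    rw [Finset.card_compl, Fintype.card_fin, p.2]
  refine ⟨⟨?_, ?_⟩, ?_⟩
  · intro c hc
    rw [Finset.mem_insert, Finset.mem_singleton] at hc
    rcases hc with rfl | rfl
    · exact Finset.card_pos.1 (by rw [p.2]; omega)
    · exact Finset.card_pos.1 (by rw [hcompl]; omega)
  · intro i
    by_cases hi : i ∈ p.1
    · refine ⟨p.1, ⟨by simp, hi⟩, ?_⟩
      rintro c ⟨hc, hic⟩
      rw [Finset.mem_insert, Finset.mem_singleton] at hc
      rcases hc with rfl | rfl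
      · rfl
      · exact absurd hi (Finset.mem_compl.1 hic)
    · refine ⟨p.1ᶜ, ⟨by simp, Finset.mem_compl.2 hi⟩, ?_⟩
      rintro c ⟨hc, hic⟩
      rw [Finset.mem_insert, Finset.mem_singleton] at hc
      rcases hc with rfl | rfl
      · exact absurd hic hi
      · rfl
  · calc ({p.1, p.1ᶜ} : Ptn m).card ≤ ({p.1ᶜ} : Ptn m).card + 1 := Finset.card_insert_le _ _
    _ ≤ 2 := by rw [Finset.card_singleton]
    _ ≤ q := hq

/-- The embedding of `O` into `P` sending `p` to `{p, pᶜ}`. -/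
noncomputable def embP (hm3 : 3 ≤ m) (hq : 2 ≤ q) (p : OO m) : PP m q :=
  ⟨({p.1, p.1ᶜ} : Ptn m), pairPart_mem_Pset hm3 hq p⟩

lemma embP_injective (hm : 5 ≤ m ∨ m = 3) (hm3 : 3 ≤ m) (hq : 2 ≤ q) :
    Function.Injective (embP (m := m) (q := q) hm3 hq) := by
  intro p t h
  have h' : ({p.1, p.1ᶜ} : Ptn m) = {t.1, t.1ᶜ} := congrArg Subtype.val h
  have hp : p.1 ∈ ({t.1, t.1ᶜ} : Ptn m) := by rw [← h']; simp
  rw [Finset.mem_insert, Finset.mem_singleton] at hp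
  rcases hp with hp | hp
  · exact Subtype.ext hp
  · exfalso
    have : (p.1).card = m - 2 := by
      rw [hp, Finset.card_compl, Fintype.card_fin, t.2]
    rw [p.2] at this
    rcases hm with h5 | h3 <;> omega

lemma Delta_embP (hm3 : 3 ≤ m) (hq : 2 ≤ q) (p t : OO m) :
    Delta (embP hm3 hq p) t = Bmat m p t := by
  classical
  have hiff : (∃ c ∈ (embP hm3 hq p).1, t.1 ⊆ c) ↔ ¬ (p.1 ∩ t.1).card = 1 := by
    constructor
    · rintro ⟨c, hc, hsub⟩ h1
      rw [embP] at hc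
      simp only [Finset.mem_insert, Finset.mem_singleton] at hc
      rcases hc with rfl | rfl
      · have htp : t.1 = p.1 := Finset.eq_of_subset_of_card_le hsub (by rw [t.2, p.2])
        rw [htp, Finset.inter_self, p.2] at h1
        omega
      · have : p.1 ∩ t.1 = ∅ := by
          ext x
          simp only [Finset.mem_inter, Finset.notMem_empty, iff_false]
          rintro ⟨hxp, hxt⟩
          exact (Finset.mem_compl.1 (hsub hxt)) hxp
        rw [this] at h1
        simp at h1
    · intro h1
      have hle : (p.1 ∩ t.1).card ≤ 2 := inter_card_le_two t.2
      have : (p.1 ∩ t.1).card = 0 ∨ (p.1 ∩ t.1).card = 2 := by omega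
      rcases this with h0 | h2
      · refine ⟨p.1ᶜ, by simp [embP], ?_⟩
        intro x hx
        rw [Finset.mem_compl]
        intro hxp
        have : x ∈ p.1 ∩ t.1 := Finset.mem_inter.2 ⟨hxp, hx⟩
        rw [Finset.card_eq_zero.1 h0] at this
        exact Finset.notMem_empty _ this
      · refine ⟨p.1, by simp [embP], ?_⟩
        have := (inter_card_two_iff p.2 t.2).1 h2
        rw [this]
  rw [Delta, Bmat, Matrix.of_apply]
  by_cases h : (p.1 ∩ t.1).card = 1
  · rw [if_neg (fun hh => (hiff.1 hh) h), if_pos h]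
  · rw [if_pos (hiff.2 h), if_neg h]

lemma W_V0_inj (hm : 5 ≤ m ∨ m = 3) (hq : 2 ≤ q) (φ : PP m q → ℚ)
    (hsupp : ∀ α : PP m q, (α : Ptn m) ∉ P2set m → φ α = 0)
    (hW : ∀ t : OO m, WLin m q φ t = 0) :
    ∀ α : PP m q, φ α = 0 := by
  classical
  have hm3 : 3 ≤ m := by rcases hm with h | h <;> omega
  set ψ : OO m → ℚ := fun p => φ (embP hm3 hq p) with hψ
  have hB0 : ∀ t : OO m, ∑ p : OO m, ψ p * Bmat m p t = 0 := by
    intro t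
    have := hW t
    rw [WLin_apply] at this
    rw [← this]
    rw [show (∑ α : PP m q, φ α * Delta α t)
        = ∑ α ∈ Finset.univ.image (embP hm3 hq), φ α * Delta α t from ?_]
    · rw [Finset.sum_image (fun p _ p' _ h => embP_injective hm hm3 hq h)]
      apply Finset.sum_congr rfl
      intro p _
      rw [Delta_embP]
    · symm
      apply Finset.sum_subset (Finset.subset_univ _)
      intro α _ hα
      have : (α : Ptn m) ∉ P2set m := by
        intro hmem
        obtain ⟨p, hp2, hpeq⟩ := hmem
        exact hα (Finset.mem_image.2 ⟨⟨p, hp2⟩, Finset.mem_univ _, Subtype.ext hpeq.symm⟩)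
      rw [hsupp α this, zero_mul]
  have hψ0 : ∀ s : OO m, ψ s = 0 := by
    intro s
    have h1 : ψ s = ∑ t : OO m, (if s = t then 1 else 0) * ψ t := by
      simp [ite_mul]
    rw [h1]
    calc ∑ t : OO m, (if s = t then 1 else 0) * ψ t
        = ∑ t : OO m, (∑ r : OO m, Dmat m s r * Bmat m r t) * ψ t := by
          apply Finset.sum_congr rfl
          intro t _
          rw [DB_apply hm s t]
      _ = ∑ t : OO m, ∑ r : OO m, Dmat m s r * Bmat m r t * ψ t := by
          apply Finset.sum_congr rfl
          intro t _
          rw [Finset.sum_mul]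
      _ = ∑ r : OO m, ∑ t : OO m, Dmat m s r * Bmat m r t * ψ t := Finset.sum_comm
      _ = ∑ r : OO m, Dmat m s r * ∑ t : OO m, ψ t * Bmat m t r := by
          apply Finset.sum_congr rfl
          intro r _
          rw [Finset.mul_sum]
          apply Finset.sum_congr rfl
          intro t _
          rw [Bmat_symm r t]
          ring
      _ = 0 := by
          apply Finset.sum_eq_zero
          intro r _
          rw [hB0 r, mul_zero]
  intro α
  by_cases hα : (α : Ptn m) ∈ P2set m
  · obtain ⟨p, hp2, hpeq⟩ := hα
    have : α = embP hm3 hq ⟨p, hp2⟩ := Subtype.ext hpeq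
    rw [this]
    exact hψ0 ⟨p, hp2⟩
  · exact hsupp α hα

end V0Aux

section ExtAux

variable {m : ℕ} {A : Type*} [Fintype A] [DecidableEq A]

lemma exists_perm_of_psiF_eq {x y : Fin m → A} (h : PsiF x = PsiF y) :
    ∃ σ : Equiv.Perm A, ∀ i, y i = σ (x i) := by
  classical
  have hiff := eq_iff_of_psiF_eq h
  set s : Finset A := Finset.univ.image x with hs
  set t : Finset A := Finset.univ.image y with ht
  have hex : ∀ a : {a // a ∈ s}, ∃ i, x i = a.1 := by
    rintro ⟨a, ha⟩
    obtain ⟨i, _, hi⟩ := Finset.mem_image.1 ha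
    exact ⟨i, hi⟩
  set pick : {a // a ∈ s} → Fin m := fun a => Classical.choose (hex a) with hpickdef
  have hpick : ∀ a, x (pick a) = a.1 := fun a => Classical.choose_spec (hex a)
  set F : {a // a ∈ s} → {a // a ∈ t} := fun a =>
    ⟨y (pick a), Finset.mem_image.2 ⟨pick a, Finset.mem_univ _, rfl⟩⟩ with hF
  have hFinj : Function.Injective F := by
    intro a a' hFa
    have h1 : y (pick a) = y (pick a') := congrArg Subtype.val hFa
    have h2 : x (pick a) = x (pick a') := (hiff _ _).2 h1
    rw [hpick a, hpick a'] at h2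
    exact Subtype.ext h2
  have hFsurj : Function.Surjective F := by
    rintro ⟨b, hb⟩
    obtain ⟨j, _, hj⟩ := Finset.mem_image.1 hb
    refine ⟨⟨x j, Finset.mem_image.2 ⟨j, Finset.mem_univ _, rfl⟩⟩, ?_⟩
    apply Subtype.ext
    show y (pick _) = b
    rw [← hj]
    apply (hiff _ j).1
    exact hpick ⟨x j, _⟩
  set e := Equiv.ofBijective F ⟨hFinj, hFsurj⟩ with he
  refine ⟨e.extendSubtype, fun i => ?_⟩
  have hxi : x i ∈ s := Finset.mem_image.2 ⟨i, Finset.mem_univ _, rfl⟩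
  rw [Equiv.extendSubtype_apply_of_mem e (x i) hxi]
  show y i = (F ⟨x i, hxi⟩).1
  have : x (pick ⟨x i, hxi⟩) = x i := hpick ⟨x i, hxi⟩
  exact ((hiff _ _).1 this).symm

lemma exists_perm_comp {n : ℕ} {β : Type*} [DecidableEq β] (f f' : Fin n → β)
    (h : ∀ b : β, (Finset.univ.filter fun k => f k = b).card
      = (Finset.univ.filter fun k => f' k = b).card) :
    ∃ π : Equiv.Perm (Fin n), ∀ k, f (π k) = f' k := by
  classical
  have hcard : ∀ b : β, Fintype.card {k // f' k = b} = Fintype.card {k // f k = b} := by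
    intro b
    rw [Fintype.card_subtype, Fintype.card_subtype, h b]
  set e : ∀ b : β, {k // f' k = b} ≃ {k // f k = b} :=
    fun b => Fintype.equivOfCardEq (hcard b) with he
  set π : Equiv.Perm (Fin n) :=
    (Equiv.sigmaFiberEquiv f').symm.trans
      ((Equiv.sigmaCongrRight e).trans (Equiv.sigmaFiberEquiv f)) with hπ
  refine ⟨π, fun k => ?_⟩
  have h1 : (Equiv.sigmaFiberEquiv f').symm k = ⟨f' k, ⟨k, rfl⟩⟩ := rfl
  have h2 : π k = ((e (f' k)) ⟨k, rfl⟩).1 := by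
    rw [hπ]
    rfl
  rw [h2]
  exact ((e (f' k)) ⟨k, rfl⟩).2

lemma stab_mem_mon {n : ℕ} {lam : Fin m → Fin n → A} {g : Equiv.Perm (Fin m)}
    (hstab : permF g (etaP (Fintype.card A) lam) = etaP (Fintype.card A) lam)
    (hiso : g ∈ IsoSet lam) : g ∈ MonSet lam := by
  classical
  set f : Fin n → Ptn m := fun k => fCol lam k with hf
  set f' : Fin n → Ptn m := fun k => PsiF (fun i => lam (g i) k) with hf'
  have hrel : ∀ k, f' k = permPart g⁻¹ (f k) :=
    fun k => psiF_comp_perm (fun i => lam i k) g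
  -- the multiplicity of every partition is preserved
  have hcount : ∀ β : Ptn m, (Finset.univ.filter fun k => f k = β).card
      = (Finset.univ.filter fun k => f' k = β).card := by
    intro β
    by_cases hβ : β ∈ Pset m (Fintype.card A)
    · have hstep : ∀ k, f' k = β ↔ f k = permPart g β := by
        intro k
        rw [hrel k]
        constructor
        · intro hk
          rw [← hk, permPart_inv_right]
        · intro hk
          rw [hk, permPart_inv_left]
      have h2 : (Finset.univ.filter fun k => f' k = β)
          = Finset.univ.filter fun k => f k = permPart g β := by
        ext k
        simp only [Finset.mem_filter, Finset.mem_univ, true_and]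
        exact hstep k
      rw [h2]
      -- use the stabilizer property
      have hα := congrFun hstab ⟨permPart g β, permPart_mem_Pset g hβ⟩
      have : eta lam (permPart g⁻¹ (permPart g β)) = eta lam (permPart g β) := hα
      rw [permPart_inv_left] at this
      have hcast : ((Finset.univ.filter fun k => f k = β).card : ℚ)
          = ((Finset.univ.filter fun k => f k = permPart g β).card : ℚ) := this
      exact_mod_cast hcast
    · have hz1 : (Finset.univ.filter fun k => f k = β) = ∅ := by
        apply Finset.filter_eq_empty_iff.2
        intro k _ hk
        exact hβ (hk ▸ psiF_mem_Pset (fun i => lam i k))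
      have hz2 : (Finset.univ.filter fun k => f' k = β) = ∅ := by
        apply Finset.filter_eq_empty_iff.2
        intro k _ hk
        apply hβ
        rw [← hk, hrel k]
        exact permPart_mem_Pset g⁻¹ (psiF_mem_Pset (fun i => lam i k))
      rw [hz1, hz2]
  obtain ⟨π, hπ⟩ := exists_perm_comp f f' hcount
  have hσ : ∀ k : Fin n, ∃ σ : Equiv.Perm A, ∀ i, lam (g i) k = σ (lam i (π k)) := by
    intro k
    apply exists_perm_of_psiF_eq
    exact hπ k
  choose σ hσ' using hσ
  refine ⟨hiso, fun a k => σ k (a (π k)), ⟨π, σ, fun a k => rfl⟩, ?_⟩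
  intro i
  funext k
  exact (hσ' k i).symm

end ExtAux

section FinalAux

variable {m q : ℕ}

open Classical in
/-- Truncation of a multiplicity function: kill the `P₂` part. -/
noncomputable def truncP2 (η : PP m q → ℚ) : PP m q → ℚ :=
  fun α => if (α : Ptn m) ∈ P2set m then 0 else η α

/-- The stabilizer of a function on `P` as a subgroup of `S(M)`. -/
def stabSubgroup (η : PP m q → ℚ) : Subgroup (Equiv.Perm (Fin m)) where
  carrier := StabSet η
  one_mem' := permF_one η
  mul_mem' := by
    intro a b ha hb
    show permF (a * b) η = η
    rw [permF_mul]
    show permF a (permF b η) = η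
    rw [hb, ha]
  inv_mem' := by
    intro a ha
    show permF a⁻¹ η = η
    have h1 : permF a η = η := ha
    conv_lhs => rw [← h1]
    rw [← permF_mul, inv_mul_cancel, permF_one]

lemma mem_stabSubgroup {η : PP m q → ℚ} {g : Equiv.Perm (Fin m)} :
    g ∈ stabSubgroup η ↔ permF g η = η := Iff.rfl

lemma truncP2_vanish (η : PP m q → ℚ) (α : PP m q) (hα : (α : Ptn m) ∈ P2set m) :
    truncP2 η α = 0 := by
  rw [truncP2, if_pos hα]

lemma truncP2_eq (η : PP m q → ℚ) (α : PP m q) (hα : (α : Ptn m) ∉ P2set m) :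
    truncP2 η α = η α := by
  rw [truncP2, if_neg hα]

lemma permF_truncP2 {η : PP m q → ℚ} {g : Equiv.Perm (Fin m)}
    (hst : permF g η = η) : permF g (truncP2 η) = truncP2 η := by
  funext α
  show truncP2 η (permPP g⁻¹ α) = truncP2 η α
  by_cases hα : (α : Ptn m) ∈ P2set m
  · rw [truncP2_vanish η _ (P2set_perm g⁻¹ hα), truncP2_vanish η α hα]
  · have hβ : ((permPP g⁻¹ α : PP m q) : Ptn m) ∉ P2set m := by
      intro hmem
      apply hα
      have := P2set_perm g hmem
      rwa [permPP_coe, permPart_inv_right] at this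
    rw [truncP2_eq η _ hβ, truncP2_eq η α hα]
    exact congrFun hst α

/-- The stabilizer of a function vanishing on `P₂` is closed under the action on `P ∖ P₂`. -/
lemma closedUnder_stab (ξ : PP m q → ℚ)
    (hvan : ∀ α : PP m q, (α : Ptn m) ∈ P2set m → ξ α = 0) :
    ClosedUnder permPart (Pset m q \ P2set m)
      ((stabSubgroup ξ : Subgroup (Equiv.Perm (Fin m))) : Set (Equiv.Perm (Fin m))) := by
  intro g hg
  show permF g ξ = ξ
  funext α
  show ξ (permPP g⁻¹ α) = ξ α
  by_cases hα : (α : Ptn m) ∈ P2set m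
  · rw [hvan _ (P2set_perm g⁻¹ hα), hvan α hα]
  · set β : PP m q := permPP g⁻¹ α with hβ
    have hαβ : permPart g (β : Ptn m) = (α : Ptn m) := by
      rw [hβ, permPP_coe, permPart_inv_right]
    have hβP2 : (β : Ptn m) ∉ P2set m := by
      intro hmem
      exact hα (hαβ ▸ P2set_perm g hmem)
    have hβmem : (β : Ptn m) ∈ Pset m q \ P2set m := ⟨β.2, hβP2⟩
    obtain ⟨h, hh, heq⟩ := hg (β : Ptn m) hβmem
    have hhst : permF h ξ = ξ := hh
    have hhβ : permPP h⁻¹ α = β := by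
      apply Subtype.ext
      rw [permPP_coe, ← hαβ, heq, permPart_inv_left]
    calc ξ β = ξ (permPP h⁻¹ α) := by rw [hhβ]
    _ = permF h ξ α := rfl
    _ = ξ α := by rw [hhst]

end FinalAux
/-- For a code of cardinality `m` (`m ≥ 5` or `m = 3`) over an alphabet of
cardinality `q ≥ 2`, there is a subgroup `H ≤ S(M)` closed under the action on `P ∖ P₂`
with `Mon(C) = H ∩ Iso(C)`. -/
theorem mon_eq_closed_inter_iso {A : Type*} [Fintype A] [DecidableEq A]
    (hq : 2 ≤ Fintype.card A) {m n : ℕ} (hm : 5 ≤ m ∨ m = 3) (hn : 0 < n)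
    (lam : Fin m → Fin n → A) (hlam : Function.Injective lam) :
    ∃ H : Subgroup (Equiv.Perm (Fin m)),
      ClosedUnder permPart (Pset m (Fintype.card A) \ P2set m) (H : Set (Equiv.Perm (Fin m))) ∧
      MonSet lam = (H : Set (Equiv.Perm (Fin m))) ∩ IsoSet lam := by
  classical
  have hm3 : 3 ≤ m := by rcases hm with h | h <;> omega
  set Q := Fintype.card A with hQ
  set η : PP m Q → ℚ := etaP Q lam with hη
  refine ⟨stabSubgroup (truncP2 η), closedUnder_stab _ (truncP2_vanish η), ?_⟩
  ext g
  simp only [Set.mem_inter_iff, SetLike.mem_coe, mem_stabSubgroup]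
  constructor
  · intro hgmon
    refine ⟨permF_truncP2 (mon_mem_stab hgmon), hgmon.1⟩
  · rintro ⟨hgH, hgiso⟩
    -- step 1: the W-image of η is g-invariant
    have hWinv : ∀ t : OO m, WLin m Q (permF g η) t = WLin m Q η t := by
      intro t
      rw [W_perm]
      obtain ⟨i, j, hij, hijt⟩ := Finset.card_eq_two.1 t.2
      have hij' : g⁻¹ i ≠ g⁻¹ j := fun h => hij (g⁻¹.injective h)
      have hpair : ((pairOO g⁻¹ t : OO m) : Finset (Fin m)) = {g⁻¹ i, g⁻¹ j} := by
        show t.1.image ⇑g⁻¹ = _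
        rw [hijt, Finset.image_insert, Finset.image_singleton]
      rw [hη, W_eta_eq_dist lam hij' (pairOO g⁻¹ t) hpair, W_eta_eq_dist lam hij t hijt]
      have := hgiso (g⁻¹ i) (g⁻¹ j)
      simp only [Equiv.Perm.inv_def, Equiv.apply_symm_apply] at this
      exact_mod_cast congrArg (fun z : ℕ => (z : ℚ)) this.symm
    -- step 2: deduce that η itself is g-invariant
    have hφ : ∀ α : PP m Q, permF g η α - η α = 0 := by
      apply W_V0_inj hm (hQ ▸ hq) (fun α => permF g η α - η α)
      · intro α hα
        have h1 : permF g η α = permF g (truncP2 η) α := by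
          show η (permPP g⁻¹ α) = truncP2 η (permPP g⁻¹ α)
          have : ((permPP g⁻¹ α : PP m Q) : Ptn m) ∉ P2set m := by
            intro hmem
            apply hα
            have := P2set_perm g hmem
            rwa [permPP_coe, permPart_inv_right] at this
          rw [truncP2_eq η _ this]
        rw [h1, hgH, truncP2_eq η α hα, sub_self]
      · intro t
        have : WLin m Q (fun α => permF g η α - η α)
            = WLin m Q (permF g η) - WLin m Q η := by
          rw [← map_sub]
          rfl
        rw [this]
        simp only [Pi.sub_apply]
        rw [hWinv t, sub_self]
    have hstab : permF g η = η := by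
      funext α
      have := hφ α
      linarith
    exact stab_mem_mon (hη ▸ hstab) hgiso
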